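/- Let Γ and Δ be valued τ-structures with finite domains that are fractionally homomorphically equivalent. Then: (1) if Γ has a cyclic fractional polymorphism of arity ℓ, then Δ has a cyclic fractional polymorphism of arity ℓ; and (2) if Sup(fPol(Γ)) contains a cyclic operation of arity ℓ, then Sup(fPol(Δ)) contains a cyclic operation of arity ℓ. -/

import Mathlib

open scoped ENNReal NNReal

/-- The value space `ℚ ∪ {∞}`. -/
abbrev QInf : Type := WithTop ℚ

/-- The embedding of `ℚ ∪ {∞}` into the extended reals. -/
noncomputable def QInf.toE (x : QInf) : EReal :=
  WithTop.recTopCoe ⊤ (fun q : ℚ => ((q : ℝ) : EReal)) x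

/-- A relational signature: a collection of relation symbols with arities. -/
structure Signature where
  symbols : Type
  arity : symbols → ℕ

/-- A valued `τ`-structure with domain `C`. -/
def VStruct (τ : Signature) (C : Type) : Type :=
  ∀ s : τ.symbols, (Fin (τ.arity s) → C) → QInf

/-- A probability distribution on a finite type, given by its weight function. -/
def FinDist {β : Type} [Fintype β] (w : β → ℝ≥0) : Prop :=
  ∑ f : β, w f = 1

/-- Over a finite domain, a fractional operation (given by its weight function `w`)
improves a `k`-ary valued relation `R`:
`Σ_f w(f)·R(f(a^1,…,a^ℓ)) ≤ (1/ℓ)·Σ_j R(a^j)` for all `a^1,…,a^ℓ ∈ C^k`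
(where `0·∞ = 0`, computed in the extended reals). -/
def FinImproves {C : Type} [Fintype C] [DecidableEq C] {ℓ k : ℕ}
    (w : ((Fin ℓ → C) → C) → ℝ≥0) (R : (Fin k → C) → QInf) : Prop :=
  ∀ a : Fin ℓ → Fin k → C,
    (∑ f : (Fin ℓ → C) → C,
        (((w f : ℝ)) : EReal) * QInf.toE (R fun i => f fun j => a j i)) ≤
      (((ℓ : ℝ)⁻¹ : ℝ) : EReal) * ∑ j : Fin ℓ, QInf.toE (R (a j))

/-- A fractional polymorphism of a valued structure over a finite domain: a probability
distribution on the `ℓ`-ary operations improving every valued relation of `Γ`. -/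
def FinFracPol {τ : Signature} {C : Type} [Fintype C] [DecidableEq C]
    (Γ : VStruct τ C) {ℓ : ℕ} (w : ((Fin ℓ → C) → C) → ℝ≥0) : Prop :=
  FinDist w ∧ ∀ s : τ.symbols, FinImproves w (Γ s)

/-- A fractional homomorphism from `Δ` (domain `D`) to `Γ` (domain `C`) over finite
domains: a probability distribution `ν` on the maps `D → C` with
`Σ_g ν(g)·R^Γ(g(a)) ≤ R^Δ(a)` for every symbol and tuple. -/
def FinFracHom {τ : Signature} {D C : Type} [Fintype D] [DecidableEq D] [Fintype C]
    (Δ : VStruct τ D) (Γ : VStruct τ C) (ν : (D → C) → ℝ≥0) : Prop :=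
  FinDist ν ∧
    ∀ (s : τ.symbols) (a : Fin (τ.arity s) → D),
      (∑ g : D → C, (((ν g : ℝ)) : EReal) * QInf.toE (Γ s (g ∘ a))) ≤
        QInf.toE (Δ s a)

/-- A cyclic operation: `f(x_1,…,x_ℓ) = f(x_2,…,x_ℓ,x_1)`. -/
def IsCyclicOp {C : Type} {ℓ : ℕ} (f : (Fin ℓ → C) → C) : Prop :=
  ∀ x : Fin ℓ → C, f x = f (x ∘ finRotate ℓ)

lemma toE_ne_bot (x : QInf) : QInf.toE x ≠ ⊥ := by
  induction x using WithTop.recTopCoe with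
  | top => simp [QInf.toE]
  | coe q => simp [QInf.toE]

lemma ereal_coe_mul_ne_bot {r : ℝ} (hr : 0 ≤ r) {x : EReal} (hx : x ≠ ⊥) :
    (r : EReal) * x ≠ ⊥ := by
  induction x using EReal.rec with
  | bot => exact absurd rfl hx
  | coe y => rw [← EReal.coe_mul]; exact EReal.coe_ne_bot _
  | top =>
    rcases hr.eq_or_lt with h | h
    · rw [← h]; simp
    · rw [EReal.coe_mul_top_of_pos h]; simp

lemma ereal_sum_ne_bot {ι : Type*} (s : Finset ι) (v : ι → EReal)
    (hv : ∀ i ∈ s, v i ≠ ⊥) : ∑ i ∈ s, v i ≠ ⊥ := by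
  induction s using Finset.cons_induction with
  | empty => simp
  | cons a s ha ih =>
    rw [Finset.sum_cons]
    simp only [ne_eq, EReal.add_eq_bot_iff, not_or]
    exact ⟨hv a (Finset.mem_cons_self a s), ih fun i hi => hv i (Finset.mem_cons.2 (Or.inr hi))⟩

lemma ereal_coe_mul_add {r : ℝ} (hr : 0 ≤ r) {x y : EReal} (hx : x ≠ ⊥) (hy : y ≠ ⊥) :
    (r : EReal) * (x + y) = r * x + r * y := by
  rcases hr.eq_or_lt with h | h
  · rw [← h]; simp
  · induction x using EReal.rec with
    | bot => exact absurd rfl hx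
    | coe a =>
      induction y using EReal.rec with
      | bot => exact absurd rfl hy
      | coe b => norm_cast; ring
      | top =>
        rw [EReal.coe_add_top, EReal.coe_mul_top_of_pos h, ← EReal.coe_mul,
          EReal.coe_add_top]
    | top =>
      induction y using EReal.rec with
      | bot => exact absurd rfl hy
      | coe b =>
        rw [EReal.top_add_coe, EReal.coe_mul_top_of_pos h, ← EReal.coe_mul,
          EReal.top_add_coe]
      | top =>
        rw [EReal.top_add_top, EReal.coe_mul_top_of_pos h, EReal.top_add_top]

lemma ereal_coe_mul_sum {ι : Type*} (s : Finset ι) {r : ℝ} (hr : 0 ≤ r) (v : ι → EReal)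
    (hv : ∀ i ∈ s, v i ≠ ⊥) :
    (r : EReal) * ∑ i ∈ s, v i = ∑ i ∈ s, (r : EReal) * v i := by
  induction s using Finset.cons_induction with
  | empty => simp
  | cons a s ha ih =>
    rw [Finset.sum_cons, Finset.sum_cons,
      ereal_coe_mul_add hr (hv a (Finset.mem_cons_self a s))
        (ereal_sum_ne_bot s v fun i hi => hv i (Finset.mem_cons.2 (Or.inr hi))),
      ih fun i hi => hv i (Finset.mem_cons.2 (Or.inr hi))]

lemma ereal_sum_coe_mul {ι : Type*} (s : Finset ι) (c : ι → ℝ) (hc : ∀ i, 0 ≤ c i)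
    (x : EReal) :
    ((∑ i ∈ s, c i : ℝ) : EReal) * x = ∑ i ∈ s, (c i : EReal) * x := by
  induction s using Finset.cons_induction with
  | empty => simp
  | cons a s ha ih =>
    rw [Finset.sum_cons, Finset.sum_cons, EReal.coe_add,
      EReal.right_distrib_of_nonneg (EReal.coe_nonneg.2 (hc a))
        (by exact_mod_cast Finset.sum_nonneg fun i _ => hc i), ih]

lemma transfer_fracpol {τ : Signature} {C D : Type} [Fintype C] [DecidableEq C]
    [Fintype D] [DecidableEq D]
    (Γ : VStruct τ C) (Δ : VStruct τ D)
    (ν₁ : (C → D) → ℝ≥0) (hν₁ : FinFracHom Γ Δ ν₁)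
    (ν₂ : (D → C) → ℝ≥0) (hν₂ : FinFracHom Δ Γ ν₂)
    {ℓ : ℕ} (w : ((Fin ℓ → C) → C) → ℝ≥0) (hw : FinFracPol Γ w) :
    ∃ w' : ((Fin ℓ → D) → D) → ℝ≥0, FinFracPol Δ w' ∧
      (∀ h, w' h ≠ 0 → ∃ (f : (Fin ℓ → C) → C) (g : D → C) (g' : C → D),
        w f ≠ 0 ∧ (fun x => g' (f (g ∘ x))) = h) ∧
      (∀ (f : (Fin ℓ → C) → C) (g : D → C) (g' : C → D),
        w f * ν₂ g * ν₁ g' ≤ w' (fun x => g' (f (g ∘ x)))) := by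
  classical
  let Φ : ((Fin ℓ → C) → C) × ((D → C) × (C → D)) → ((Fin ℓ → D) → D) := fun t => fun x => t.2.2 (t.1 (t.2.1 ∘ x))
  let c : ((Fin ℓ → C) → C) × ((D → C) × (C → D)) → ℝ≥0 := fun t => w t.1 * ν₂ t.2.1 * ν₁ t.2.2
  have e1 : ∑ g : C → D, ν₁ g = 1 := hν₁.1
  have e2 : ∑ g : D → C, ν₂ g = 1 := hν₂.1
  have e3 : ∑ f : (Fin ℓ → C) → C, w f = 1 := hw.1
  refine ⟨fun h => ∑ t : ((Fin ℓ → C) → C) × ((D → C) × (C → D)), if Φ t = h then c t else 0, ⟨?_, ?_⟩, ?_, ?_⟩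
  · show (∑ h : (Fin ℓ → D) → D, ∑ t : ((Fin ℓ → C) → C) × ((D → C) × (C → D)), if Φ t = h then c t else 0) = 1
    rw [Finset.sum_comm]
    have : ∀ t : ((Fin ℓ → C) → C) × ((D → C) × (C → D)), (∑ h : (Fin ℓ → D) → D, if Φ t = h then c t else 0) = c t := by
      intro t
      simp [Finset.sum_ite_eq]
    rw [Finset.sum_congr rfl fun t _ => this t]
    show (∑ t : ((Fin ℓ → C) → C) × ((D → C) × (C → D)), w t.1 * ν₂ t.2.1 * ν₁ t.2.2) = 1
    simp only [Fintype.sum_prod_type, mul_assoc, ← Finset.mul_sum, e1, e2, mul_one]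
    exact e3
  · intro s
    show FinImproves _ (Δ s)
    intro a
    have hr0 : (0:ℝ) ≤ (ℓ:ℝ)⁻¹ := by positivity
    set r : EReal := (((ℓ : ℝ)⁻¹ : ℝ) : EReal) with hrdef
    set V : ((Fin ℓ → D) → D) → EReal :=
      fun h => QInf.toE (Δ s fun i => h fun j => a j i) with hV
    have step1 :
        (∑ h : (Fin ℓ → D) → D,
            ((((∑ t : ((Fin ℓ → C) → C) × ((D → C) × (C → D)), if Φ t = h then c t else 0 : ℝ≥0) : ℝ)) : EReal) * V h)
          = ∑ t : ((Fin ℓ → C) → C) × ((D → C) × (C → D)), ((c t : ℝ) : EReal) * V (Φ t) := by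
      have h1 : ∀ h : (Fin ℓ → D) → D,
          ((((∑ t : ((Fin ℓ → C) → C) × ((D → C) × (C → D)), if Φ t = h then c t else 0 : ℝ≥0) : ℝ)) : EReal) * V h
            = ∑ t : ((Fin ℓ → C) → C) × ((D → C) × (C → D)), (((if Φ t = h then c t else 0 : ℝ≥0) : ℝ) : EReal) * V h := by
        intro h
        rw [NNReal.coe_sum]
        exact ereal_sum_coe_mul _ _ (fun t => NNReal.coe_nonneg _) _
      rw [Finset.sum_congr rfl fun h _ => h1 h, Finset.sum_comm]
      refine Finset.sum_congr rfl fun t _ => ?_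
      have h2 : ∀ h : (Fin ℓ → D) → D,
          (((if Φ t = h then c t else 0 : ℝ≥0) : ℝ) : EReal) * V h
            = if Φ t = h then ((c t : ℝ) : EReal) * V h else 0 := by
        intro h
        split <;> simp
      rw [Finset.sum_congr rfl fun h _ => h2 h]
      simp [Finset.sum_ite_eq]
    have key : ∀ (f : (Fin ℓ → C) → C) (g : D → C),
        (∑ g' : C → D, ((c (f, g, g') : ℝ) : EReal) * V (Φ (f, g, g')))
          ≤ (((w f : ℝ) * (ν₂ g : ℝ) : ℝ) : EReal)
              * QInf.toE (Γ s fun i => f fun j => g (a j i)) := by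
      intro f g
      set b : Fin (τ.arity s) → C := fun i => f fun j => g (a j i) with hb
      have hA0 : (0:ℝ) ≤ (w f : ℝ) * (ν₂ g : ℝ) :=
        mul_nonneg (NNReal.coe_nonneg _) (NNReal.coe_nonneg _)
      have e : ∀ g' : C → D,
          ((c (f, g, g') : ℝ) : EReal) * V (Φ (f, g, g'))
            = ((((w f : ℝ) * (ν₂ g : ℝ) : ℝ)) : EReal)
                * (((ν₁ g' : ℝ) : EReal) * QInf.toE (Δ s (g' ∘ b))) := by
        intro g'
        have : ((c (f, g, g') : ℝ) : EReal)
            = ((((w f : ℝ) * (ν₂ g : ℝ) : ℝ)) : EReal) * ((ν₁ g' : ℝ) : EReal) := by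
          show (((w f * ν₂ g * ν₁ g' : ℝ≥0) : ℝ) : EReal) = _
          rw [← EReal.coe_mul]
          norm_cast
        rw [this, mul_assoc]
        rfl
      rw [Finset.sum_congr rfl fun g' _ => e g',
        ← ereal_coe_mul_sum _ hA0 _
          (fun g' _ => ereal_coe_mul_ne_bot (NNReal.coe_nonneg _) (toE_ne_bot _))]
      exact mul_le_mul_of_nonneg_left (hν₁.2 s b) (EReal.coe_nonneg.2 hA0)
    show (∑ h : (Fin ℓ → D) → D,
        ((((∑ t : ((Fin ℓ → C) → C) × ((D → C) × (C → D)), if Φ t = h then c t else 0 : ℝ≥0) : ℝ)) : EReal) * V h)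
      ≤ r * ∑ j : Fin ℓ, QInf.toE (Δ s (a j))
    calc (∑ h : (Fin ℓ → D) → D,
            ((((∑ t : ((Fin ℓ → C) → C) × ((D → C) × (C → D)), if Φ t = h then c t else 0 : ℝ≥0) : ℝ)) : EReal) * V h)
        = ∑ t : ((Fin ℓ → C) → C) × ((D → C) × (C → D)), ((c t : ℝ) : EReal) * V (Φ t) := step1
      _ = ∑ f : (Fin ℓ → C) → C, ∑ g : D → C, ∑ g' : C → D,
            ((c (f, g, g') : ℝ) : EReal) * V (Φ (f, g, g')) := by
          simp only [Fintype.sum_prod_type]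
      _ ≤ ∑ f : (Fin ℓ → C) → C, ∑ g : D → C,
            (((w f : ℝ) * (ν₂ g : ℝ) : ℝ) : EReal)
              * QInf.toE (Γ s fun i => f fun j => g (a j i)) :=
          Finset.sum_le_sum fun f _ => Finset.sum_le_sum fun g _ => key f g
      _ = ∑ g : D → C, ((ν₂ g : ℝ) : EReal) *
            ∑ f : (Fin ℓ → C) → C,
              ((w f : ℝ) : EReal) * QInf.toE (Γ s fun i => f fun j => g (a j i)) := by
          rw [Finset.sum_comm]
          refine Finset.sum_congr rfl fun g _ => ?_
          rw [ereal_coe_mul_sum _ (NNReal.coe_nonneg _) _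
            (fun f _ => ereal_coe_mul_ne_bot (NNReal.coe_nonneg _) (toE_ne_bot _))]
          refine Finset.sum_congr rfl fun f _ => ?_
          rw [EReal.coe_mul, mul_comm ((w f : ℝ) : EReal), mul_assoc]
      _ ≤ ∑ g : D → C, ((ν₂ g : ℝ) : EReal) *
            (r * ∑ j : Fin ℓ, QInf.toE (Γ s (g ∘ a j))) :=
          Finset.sum_le_sum fun g _ =>
            mul_le_mul_of_nonneg_left (hw.2 s fun j => g ∘ a j)
              (EReal.coe_nonneg.2 (NNReal.coe_nonneg _))
      _ = r * ∑ j : Fin ℓ, ∑ g : D → C,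
            ((ν₂ g : ℝ) : EReal) * QInf.toE (Γ s (g ∘ a j)) := by
          rw [Finset.sum_congr rfl fun g _ =>
            mul_left_comm ((ν₂ g : ℝ) : EReal) r _]
          rw [← ereal_coe_mul_sum _ hr0 _
            (fun g _ => ereal_coe_mul_ne_bot (NNReal.coe_nonneg _)
              (ereal_sum_ne_bot _ _ fun j _ => toE_ne_bot _))]
          congr 1
          rw [Finset.sum_congr rfl fun g _ =>
            ereal_coe_mul_sum Finset.univ (NNReal.coe_nonneg (ν₂ g))
              (fun j => QInf.toE (Γ s (g ∘ a j))) (fun j _ => toE_ne_bot _)]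
          exact Finset.sum_comm
      _ ≤ r * ∑ j : Fin ℓ, QInf.toE (Δ s (a j)) :=
          mul_le_mul_of_nonneg_left
            (Finset.sum_le_sum fun j _ => hν₂.2 s (a j))
            (EReal.coe_nonneg.2 hr0)
  · intro h hne
    by_contra hcon
    push_neg at hcon
    apply hne
    refine Finset.sum_eq_zero fun t _ => ?_
    split_ifs with heq
    · by_cases hw0 : w t.1 = 0
      · show w t.1 * ν₂ t.2.1 * ν₁ t.2.2 = 0
        rw [hw0, zero_mul, zero_mul]
      · exact absurd heq (hcon t.1 t.2.1 t.2.2 hw0)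
    · rfl
  · intro f g g'
    have : w f * ν₂ g * ν₁ g'
        = (if Φ (f, g, g') = Φ (f, g, g') then c (f, g, g') else 0) := by simp; rfl
    rw [this]
    exact Finset.single_le_sum
      (f := fun t => if Φ t = Φ (f, g, g') then c t else 0)
      (fun t _ => zero_le) (Finset.mem_univ (f, g, g'))

/-- if valued `τ`-structures `Γ` and `Δ` with finite domains are
fractionally homomorphically equivalent, then (1) a cyclic fractional polymorphism of
`Γ` of arity `ℓ` yields a cyclic fractional polymorphism of `Δ` of arity `ℓ`, and
(2) a cyclic operation of arity `ℓ` in `Sup(fPol(Γ))` yields a cyclic operation of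
arity `ℓ` in `Sup(fPol(Δ))`. -/
theorem cyclic_transfers_of_frac_hom_equiv {τ : Signature} [Finite τ.symbols]
    {C D : Type} [Fintype C] [DecidableEq C] [Fintype D] [DecidableEq D]
    (Γ : VStruct τ C) (Δ : VStruct τ D)
    (ν₁ : (C → D) → ℝ≥0) (hν₁ : FinFracHom Γ Δ ν₁)
    (ν₂ : (D → C) → ℝ≥0) (hν₂ : FinFracHom Δ Γ ν₂)
    (ℓ : ℕ) (hℓ : 2 ≤ ℓ) :
    ((∃ w : ((Fin ℓ → C) → C) → ℝ≥0,
        FinFracPol Γ w ∧ ∀ f, w f ≠ 0 → IsCyclicOp f) →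
      ∃ w : ((Fin ℓ → D) → D) → ℝ≥0,
        FinFracPol Δ w ∧ ∀ f, w f ≠ 0 → IsCyclicOp f) ∧
    ((∃ (w : ((Fin ℓ → C) → C) → ℝ≥0) (f : (Fin ℓ → C) → C),
        FinFracPol Γ w ∧ w f ≠ 0 ∧ IsCyclicOp f) →
      ∃ (w : ((Fin ℓ → D) → D) → ℝ≥0) (f : (Fin ℓ → D) → D),
        FinFracPol Δ w ∧ w f ≠ 0 ∧ IsCyclicOp f) := by
  
  classical
  constructor
  · rintro ⟨w, hw, hcyc⟩
    obtain ⟨w', hpol, hsup, -⟩ := transfer_fracpol Γ Δ ν₁ hν₁ ν₂ hν₂ w hw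
    refine ⟨w', hpol, fun h hne => ?_⟩
    obtain ⟨f, g, g', hf, rfl⟩ := hsup h hne
    intro x
    exact congrArg g' (hcyc f hf (g ∘ x))
  · rintro ⟨w, f, hw, hf, hcyc⟩
    obtain ⟨w', hpol, -, hlow⟩ := transfer_fracpol Γ Δ ν₁ hν₁ ν₂ hν₂ w hw
    have hg : ∃ g : D → C, ν₂ g ≠ 0 := by
      by_contra hcon
      push_neg at hcon
      have h1 : ∑ g : D → C, ν₂ g = 1 := hν₂.1
      rw [Finset.sum_eq_zero fun g _ => hcon g] at h1
      exact zero_ne_one h1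
    have hg' : ∃ g' : C → D, ν₁ g' ≠ 0 := by
      by_contra hcon
      push_neg at hcon
      have h1 : ∑ g : C → D, ν₁ g = 1 := hν₁.1
      rw [Finset.sum_eq_zero fun g _ => hcon g] at h1
      exact zero_ne_one h1
    obtain ⟨g, hg⟩ := hg
    obtain ⟨g', hg'⟩ := hg'
    refine ⟨w', fun x => g' (f (g ∘ x)), hpol, ?_, ?_⟩
    · intro h0
      have hle := hlow f g g'
      rw [h0] at hle
      exact mul_ne_zero (mul_ne_zero hf hg) hg' (le_zero_iff.mp hle)
    · intro x
      exact congrArg g' (hcyc (g ∘ x))
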